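/- Let d ≥ 2, let γ : ℝ^{d−1} → ℝ be Lipschitz, and fix x' ∈ ℝ^{d−1}. Assume for every v' ∈ ℝ^{d−1} the one-sided directional derivative g(v') := lim_{t→0+} (γ(x' + t v') − γ(x'))/t exists and that v' ↦ g(v') is continuous. Then the Bouligand tangent cone of epi(γ) at the point (x', γ(x')) equals epi(g), i.e. T^B_{(x', γ(x'))}(epi(γ)) = {v ∈ ℝ^d : v_d ≥ g(v')}. -/

import Mathlib

open Set Topology Filter

noncomputable section

/-- The epigraph of `γ : ℝ^{d-1} → ℝ`, as a subset of `ℝ^d ≃ ℝ^{d-1} × ℝ`. -/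
def epi {n : ℕ} (γ : EuclideanSpace ℝ (Fin n) → ℝ) : Set (EuclideanSpace ℝ (Fin n) × ℝ) :=
  {y | γ y.1 ≤ y.2}

/-- The Bouligand tangent cone of `A` at `a`: `0` together with all `v ≠ 0` such that there is a
sequence `(u m)` in `A` with `u m ≠ a`, `u m → a`, and `(u m - a)/‖u m - a‖ → v/‖v‖`. -/
def bouligand {E : Type*} [NormedAddCommGroup E] [NormedSpace ℝ E] (A : Set E) (a : E) :
    Set E :=
  {0} ∪ {v | v ≠ 0 ∧ ∃ u : ℕ → E, (∀ m, u m ∈ A) ∧ (∀ m, u m ≠ a) ∧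
    Tendsto u atTop (nhds a) ∧
    Tendsto (fun m => ‖u m - a‖⁻¹ • (u m - a)) atTop (nhds (‖v‖⁻¹ • v))}

lemma keylim {n : ℕ} (γ : EuclideanSpace ℝ (Fin n) → ℝ) (K : NNReal)
    (hγ : LipschitzWith K γ) (x' : EuclideanSpace ℝ (Fin n)) (g : EuclideanSpace ℝ (Fin n) → ℝ)
    (hg : ∀ v' : EuclideanSpace ℝ (Fin n),
      Tendsto (fun t : ℝ => (γ (x' + t • v') - γ x') / t) (𝓝[>] 0) (𝓝 (g v')))
    (v' : EuclideanSpace ℝ (Fin n)) (t : ℕ → ℝ) (z : ℕ → EuclideanSpace ℝ (Fin n))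
    (ht : ∀ m, 0 < t m) (ht0 : Tendsto t atTop (𝓝 0)) (hz : Tendsto z atTop (𝓝 v')) :
    Tendsto (fun m => (γ (x' + t m • z m) - γ x') / t m) atTop (𝓝 (g v')) := by
  have htS : Tendsto t atTop (𝓝[>] (0:ℝ)) :=
    tendsto_nhdsWithin_of_tendsto_nhds_of_eventually_within _ ht0 (Eventually.of_forall ht)
  have hf : Tendsto (fun m => (γ (x' + t m • v') - γ x') / t m) atTop (𝓝 (g v')) :=
    (hg v').comp htS
  have hdiff : Tendsto (fun m => (γ (x' + t m • z m) - γ x') / t m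
      - (γ (x' + t m • v') - γ x') / t m) atTop (𝓝 0) := by
    apply squeeze_zero_norm (a := fun m => (K : ℝ) * ‖z m - v'‖)
    · intro m
      have h1 : dist (γ (x' + t m • z m)) (γ (x' + t m • v')) ≤ K * (t m * ‖z m - v'‖) := by
        have h := hγ.dist_le_mul (x' + t m • z m) (x' + t m • v')
        have hd : dist (x' + t m • z m) (x' + t m • v') = t m * ‖z m - v'‖ := by
          rw [dist_eq_norm]
          have : (x' + t m • z m) - (x' + t m • v') = t m • (z m - v') := by
            rw [smul_sub]; abel
          rw [this, norm_smul, Real.norm_eq_abs, abs_of_pos (ht m)]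
        rw [hd] at h; exact h
      have h2 : (γ (x' + t m • z m) - γ x') / t m - (γ (x' + t m • v') - γ x') / t m
          = (γ (x' + t m • z m) - γ (x' + t m • v')) / t m := by ring
      rw [h2, Real.norm_eq_abs, abs_div, abs_of_pos (ht m), div_le_iff₀ (ht m)]
      rw [Real.dist_eq] at h1
      nlinarith [h1]
    · have : Tendsto (fun m => ‖z m - v'‖) atTop (𝓝 0) := by
        simpa using ((hz.sub (tendsto_const_nhds (α := _) (x := v'))).norm)
      simpa using tendsto_const_nhds.mul this
  have := hdiff.add hf
  simpa using this

/-- for `γ : ℝ^{d-1} → ℝ` Lipschitz with continuous one-sided directional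
derivative `g` at `x'`, the Bouligand tangent cone of `epi γ` at `(x', γ x')` is the epigraph
of `g`. -/
theorem stmt_3 (n : ℕ) (hn : 1 ≤ n) (γ : EuclideanSpace ℝ (Fin n) → ℝ)
    (K : NNReal) (hγ : LipschitzWith K γ) (x' : EuclideanSpace ℝ (Fin n))
    (g : EuclideanSpace ℝ (Fin n) → ℝ)
    (hg : ∀ v' : EuclideanSpace ℝ (Fin n),
      Tendsto (fun t : ℝ => (γ (x' + t • v') - γ x') / t) (𝓝[>] 0) (𝓝 (g v')))
    (hgc : Continuous g) :
    bouligand (epi γ) (x', γ x') = {v : EuclideanSpace ℝ (Fin n) × ℝ | g v.1 ≤ v.2} := by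
  have hg0 : g 0 = 0 := by
    have h := hg 0
    simp only [smul_zero, add_zero, sub_self, zero_div] at h
    exact tendsto_nhds_unique h tendsto_const_nhds
  set a : EuclideanSpace ℝ (Fin n) × ℝ := (x', γ x') with ha
  ext v
  constructor
  · rintro (h0 | ⟨hv, u, huA, hune, hulim, hudir⟩)
    · simp only [mem_singleton_iff] at h0
      subst h0
      simp [hg0]
    · -- forward direction
      have hv0 : ‖v‖ ≠ 0 := norm_ne_zero_iff.mpr hv
      have hvpos : (0:ℝ) < ‖v‖ := norm_pos_iff.mpr hv
      have htpos : ∀ m, 0 < ‖u m - a‖ := fun m =>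
        norm_pos_iff.mpr (sub_ne_zero.mpr (hune m))
      have ht0 : Tendsto (fun m => ‖u m - a‖) atTop (𝓝 0) := by
        simpa using ((hulim.sub (tendsto_const_nhds (x := a))).norm)
      set z : ℕ → EuclideanSpace ℝ (Fin n) × ℝ :=
        fun m => ‖v‖ • (‖u m - a‖⁻¹ • (u m - a)) with hzdef
      have hz : Tendsto z atTop (𝓝 v) := by
        have h1 := hudir.const_smul (‖v‖)
        simpa [hzdef, smul_smul, mul_inv_cancel₀ hv0] using h1
      set s : ℕ → ℝ := fun m => ‖u m - a‖ / ‖v‖ with hsdef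
      have hspos : ∀ m, 0 < s m := fun m => div_pos (htpos m) hvpos
      have hs0 : Tendsto s atTop (𝓝 0) := by
        simpa [hsdef] using ht0.div_const ‖v‖
      have key : ∀ m, u m = a + s m • z m := by
        intro m
        have h2 : s m • z m = u m - a := by
          rw [hzdef, hsdef, smul_smul, smul_smul, div_mul_cancel₀ _ hv0,
            mul_inv_cancel₀ (htpos m).ne', one_smul]
        rw [h2]; abel
      have hz1 : Tendsto (fun m => (z m).1) atTop (𝓝 v.1) :=
        (continuous_fst.tendsto v).comp hz
      have hz2 : Tendsto (fun m => (z m).2) atTop (𝓝 v.2) :=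
        (continuous_snd.tendsto v).comp hz
      have hkl := keylim γ K hγ x' g hg v.1 s (fun m => (z m).1) hspos hs0 hz1
      refine le_of_tendsto_of_tendsto' hkl hz2 (fun m => ?_)
      have hmem : γ (u m).1 ≤ (u m).2 := huA m
      have h1 : (u m).1 = x' + s m • (z m).1 := by rw [key m]; rfl
      have h2 : (u m).2 = γ x' + s m * (z m).2 := by rw [key m]; rfl
      rw [h1, h2] at hmem
      rw [div_le_iff₀ (hspos m)]
      nlinarith [hmem]
  · intro hv
    by_cases hv0 : v = 0
    · left; simp [hv0]
    · right
      refine ⟨hv0, ?_⟩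
      simp only [mem_setOf_eq] at hv
      set t : ℕ → ℝ := fun m => ((m : ℝ) + 1)⁻¹ with htdef
      have htpos : ∀ m, 0 < t m := fun m => by positivity
      have ht0 : Tendsto t atTop (𝓝 0) := by
        simpa [htdef, one_div] using tendsto_one_div_add_atTop_nhds_zero_nat (𝕜 := ℝ)
      set u : ℕ → EuclideanSpace ℝ (Fin n) × ℝ :=
        fun m => (x' + t m • v.1, γ (x' + t m • v.1) + t m * (v.2 - g v.1)) with hudef
      have hsub : ∀ m, u m - a = (t m • v.1, γ (x' + t m • v.1) - γ x' + t m * (v.2 - g v.1)) := by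
        intro m
        rw [hudef, ha, Prod.ext_iff]
        constructor
        · show (x' + t m • v.1) - x' = t m • v.1; abel
        · show (γ (x' + t m • v.1) + t m * (v.2 - g v.1)) - γ x' = _; ring
      have hune : ∀ m, u m ≠ a := by
        intro m
        by_cases hv1 : v.1 = 0
        · have hv2 : 0 < v.2 := by
            have hv' := hv
            rw [hv1, hg0] at hv'
            rcases hv'.lt_or_eq with h | h
            · exact h
            · exact absurd (Prod.ext hv1 h.symm) hv0
          intro hcon
          have h2 : (u m).2 = γ x' := congrArg Prod.snd hcon
          rw [hudef] at h2
          simp only [hv1, hg0, smul_zero, add_zero, sub_zero] at h2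
          nlinarith [htpos m, hv2, h2]
        · intro hcon
          have h1 := congrArg Prod.fst hcon
          have : t m • v.1 = 0 := by
            have : x' + t m • v.1 = x' := h1
            simpa [add_eq_left] using this
          exact hv1 (by simpa [smul_eq_zero, (htpos m).ne'] using this)
      have hulim : Tendsto u atTop (𝓝 a) := by
        have h1 : Tendsto (fun m => x' + t m • v.1) atTop (𝓝 x') := by
          have := ht0.smul_const v.1
          simpa using (tendsto_const_nhds (x := x')).add this
        have h2 : Tendsto (fun m => γ (x' + t m • v.1) + t m * (v.2 - g v.1)) atTop
            (𝓝 (γ x')) := by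
          have hc : Tendsto (fun m => γ (x' + t m • v.1)) atTop (𝓝 (γ x')) :=
            (hγ.continuous.tendsto x').comp h1
          have hd : Tendsto (fun m => t m * (v.2 - g v.1)) atTop (𝓝 0) := by
            simpa using ht0.mul_const (v.2 - g v.1)
          simpa using hc.add hd
        exact h1.prodMk_nhds h2
      have he : Tendsto (fun m => (t m)⁻¹ • (u m - a)) atTop (𝓝 v) := by
        have he1 : Tendsto (fun m => ((t m)⁻¹ • (u m - a)).1) atTop (𝓝 v.1) := by
          have : ∀ m, ((t m)⁻¹ • (u m - a)).1 = v.1 := by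
            intro m
            show (t m)⁻¹ • (u m - a).1 = v.1
            rw [hsub m]
            show (t m)⁻¹ • (t m • v.1) = v.1
            rw [smul_smul, inv_mul_cancel₀ (htpos m).ne', one_smul]
          simp only [this]; exact tendsto_const_nhds
        have he2 : Tendsto (fun m => ((t m)⁻¹ • (u m - a)).2) atTop (𝓝 v.2) := by
          have heq : ∀ m, ((t m)⁻¹ • (u m - a)).2
              = (γ (x' + t m • v.1) - γ x') / t m + (v.2 - g v.1) := by
            intro m
            show (t m)⁻¹ • (u m - a).2 = _
            rw [hsub m]
            show (t m)⁻¹ * (γ (x' + t m • v.1) - γ x' + t m * (v.2 - g v.1)) = _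
            rw [mul_add, ← div_eq_inv_mul, ← mul_assoc, inv_mul_cancel₀ (htpos m).ne', one_mul]
          simp only [heq]
          have hkl := keylim γ K hγ x' g hg v.1 t (fun _ => v.1) htpos ht0 tendsto_const_nhds
          have := hkl.add (tendsto_const_nhds (x := v.2 - g v.1))
          simpa using this
        have hpe := he1.prodMk_nhds he2
        simpa only [Prod.mk.eta] using hpe
      refine ⟨u, fun m => ?_, hune, hulim, ?_⟩
      · show γ (u m).1 ≤ (u m).2
        rw [hudef]
        have : 0 ≤ t m * (v.2 - g v.1) := mul_nonneg (htpos m).le (by linarith)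
        show γ (x' + t m • v.1) ≤ γ (x' + t m • v.1) + t m * (v.2 - g v.1)
        linarith
      · have hF : ContinuousAt (fun x : EuclideanSpace ℝ (Fin n) × ℝ => ‖x‖⁻¹ • x) v :=
          ((continuous_norm.continuousAt).inv₀ (norm_ne_zero_iff.mpr hv0)).smul continuousAt_id
        have hcomp := (hF.tendsto).comp he
        have heq : ∀ m, ‖(t m)⁻¹ • (u m - a)‖⁻¹ • ((t m)⁻¹ • (u m - a))
            = ‖u m - a‖⁻¹ • (u m - a) := by
          intro m
          have h1 : t m ≠ 0 := (htpos m).ne'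
          have h2 : ‖u m - a‖ ≠ 0 := (norm_pos_iff.mpr (sub_ne_zero.mpr (hune m))).ne'
          rw [norm_smul, Real.norm_eq_abs, abs_of_pos (inv_pos.mpr (htpos m)), smul_smul]
          congr 1
          field_simp
        exact hcomp.congr heq
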